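/- Let $u_{\mathcal{A}}$ be the equiangular vector of $X_{\mathcal{A}}$ with equiangular constant $A_{\mathcal{A}}$, and for any unit vector $u \in \mathrm{span}(X_{\mathcal{A}})$ let $\mu(\gamma) = \hat{\mu} + \gamma u$ and $S(\gamma) = \|y - \mu(\gamma)\|^2$, where $X_{\mathcal{A}}'(y - \hat{\mu}) = \hat{C}\mathbf{1}$ with $\hat{C} > 0$. Then $-S'(0) = 2\hat{C}\, (u_{\mathcal{A}}'u)/A_{\mathcal{A}}$, and consequently among all unit vectors $u \in \mathrm{span}(X_{\mathcal{A}})$ the instantaneous decrease $-S'(0)$ is maximized by $u = u_{\mathcal{A}}$, with maximal value $2\hat{C}/A_{\mathcal{A}}$. -/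

import Mathlib

open Matrix

theorem stmt17 (n k : ℕ) (hk : 0 < k)
    (X : Matrix (Fin n) (Fin k) ℝ) (hli : LinearIndependent ℝ X.transpose)
    (hunit : ∀ j, (fun i => X i j) ⬝ᵥ (fun i => X i j) = 1)
    (y muhat : Fin n → ℝ) (C : ℝ) (hC : 0 < C)
    (hcorr : X.transpose *ᵥ (y - muhat) = C • (1 : Fin k → ℝ))
    (u : Fin n → ℝ) (huu : u ⬝ᵥ u = 1)
    (hspan : u ∈ Submodule.span ℝ (Set.range X.transpose)) :
    let G : Matrix (Fin k) (Fin k) ℝ := X.transpose * X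
    let A : ℝ := (Real.sqrt ((1 : Fin k → ℝ) ⬝ᵥ (G⁻¹ *ᵥ (1 : Fin k → ℝ))))⁻¹
    let uA : Fin n → ℝ := A • (X *ᵥ (G⁻¹ *ᵥ (1 : Fin k → ℝ)))
    HasDerivAt (fun γ : ℝ => (y - (muhat + γ • u)) ⬝ᵥ (y - (muhat + γ • u)))
        (-(2 * C * (uA ⬝ᵥ u) / A)) 0 ∧
      2 * C * (uA ⬝ᵥ u) / A ≤ 2 * C / A ∧
      2 * C * (uA ⬝ᵥ uA) / A = 2 * C / A := by
  intro G A uA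
  have hGdef : G = X.transpose * X := rfl
  -- injectivity of mulVec
  have hinj : Function.Injective X.mulVec := Matrix.mulVec_injective_iff.mpr hli
  -- G is positive definite
  have hGpd : G.PosDef := by
    refine Matrix.PosDef.of_dotProduct_mulVec_pos (by rw [hGdef]; simpa using Matrix.isHermitian_conjTranspose_mul_self X) fun x hx => ?_
    have hXx : X *ᵥ x ≠ 0 := fun h => hx (hinj (by simpa using h))
    have heq : (star x) ⬝ᵥ (G *ᵥ x) = (X *ᵥ x) ⬝ᵥ (X *ᵥ x) := by
      rw [hGdef, ← Matrix.mulVec_mulVec, Matrix.dotProduct_mulVec,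
        ← Matrix.mulVec_transpose]
      simp [dotProduct_comm]
    rw [heq]
    have hnn : 0 ≤ (X *ᵥ x) ⬝ᵥ (X *ᵥ x) := Finset.sum_nonneg fun i _ => mul_self_nonneg _
    rcases lt_or_eq_of_le hnn with h | h
    · exact h
    · exact absurd (dotProduct_self_eq_zero.mp h.symm) hXx
  have hdet : IsUnit G.det := hGpd.det_pos.ne'.isUnit
  have hGinv : G * G⁻¹ = 1 := Matrix.mul_nonsing_inv G hdet
  -- key dot product identity
  have key : ∀ a b : Fin k → ℝ, (X *ᵥ a) ⬝ᵥ (X *ᵥ b) = (G *ᵥ a) ⬝ᵥ b := by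
    intro a b
    rw [Matrix.dotProduct_mulVec, ← Matrix.mulVec_transpose, Matrix.mulVec_mulVec, hGdef]
  -- G symmetric
  have hGsym : Gᵀ = G := hGpd.1
  have hGv : G *ᵥ (G⁻¹ *ᵥ (1 : Fin k → ℝ)) = 1 := by
    rw [Matrix.mulVec_mulVec, hGinv, Matrix.one_mulVec]
  -- s > 0
  set s : ℝ := (1 : Fin k → ℝ) ⬝ᵥ (G⁻¹ *ᵥ (1 : Fin k → ℝ)) with hs
  have hone : (1 : Fin k → ℝ) ≠ 0 := by
    intro h
    have := congrFun h ⟨0, hk⟩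
    simp at this
  have hspos : 0 < s := by
    have := (hGpd.inv).dotProduct_mulVec_pos hone
    simpa [hs] using this
  have hAdef : A = (Real.sqrt s)⁻¹ := rfl
  have hApos : 0 < A := by
    rw [hAdef]
    exact inv_pos.mpr (Real.sqrt_pos.mpr hspos)
  have hA2 : A ^ 2 * s = 1 := by
    rw [hAdef, ← Real.sqrt_inv]
    rw [Real.sq_sqrt (by positivity)]
    field_simp
  -- get v with X *ᵥ v = u
  change u ∈ Submodule.span ℝ (Set.range X.col) at hspan
  rw [← Matrix.range_mulVecLin] at hspan
  obtain ⟨v, hv⟩ := hspan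
  have hv' : X *ᵥ v = u := hv
  -- compute uA ⬝ᵥ u
  have huAu : uA ⬝ᵥ u = A * ((1 : Fin k → ℝ) ⬝ᵥ v) := by
    show (A • (X *ᵥ (G⁻¹ *ᵥ (1 : Fin k → ℝ)))) ⬝ᵥ u = _
    rw [smul_dotProduct, ← hv', key, hGv]
    simp
  have huAuA : uA ⬝ᵥ uA = 1 := by
    show (A • (X *ᵥ (G⁻¹ *ᵥ (1 : Fin k → ℝ)))) ⬝ᵥ (A • (X *ᵥ (G⁻¹ *ᵥ (1 : Fin k → ℝ)))) = 1
    rw [smul_dotProduct, dotProduct_smul, key, hGv, smul_eq_mul, smul_eq_mul,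
      ← hs, ← hA2]
    ring
  -- compute u ⬝ᵥ (y - muhat)
  have hb : u ⬝ᵥ (y - muhat) = C * ((1 : Fin k → ℝ) ⬝ᵥ v) := by
    rw [← hv', dotProduct_comm, Matrix.dotProduct_mulVec, ← Matrix.mulVec_transpose,
      hcorr, smul_dotProduct, smul_eq_mul]
  have hkey2 : 2 * C * (uA ⬝ᵥ u) / A = 2 * (u ⬝ᵥ (y - muhat)) := by
    rw [huAu, hb]
    field_simp
  refine ⟨?_, ?_, ?_⟩
  · -- derivative
    have hfun : (fun γ : ℝ => (y - (muhat + γ • u)) ⬝ᵥ (y - (muhat + γ • u)))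
        = fun γ : ℝ => ((y - muhat) ⬝ᵥ (y - muhat)) - 2 * ((y - muhat) ⬝ᵥ u) * γ + γ ^ 2 := by
      funext γ
      rw [show y - (muhat + γ • u) = (y - muhat) - γ • u by abel]
      simp only [sub_dotProduct, dotProduct_sub, smul_dotProduct,
        dotProduct_smul, smul_eq_mul, huu]
      rw [dotProduct_comm u y, dotProduct_comm u muhat]
      ring
    rw [hfun, hkey2, dotProduct_comm u (y - muhat)]
    set a := (y - muhat) ⬝ᵥ (y - muhat)
    set b := (y - muhat) ⬝ᵥ u
    have h1 : HasDerivAt (fun γ : ℝ => 2 * b * γ) (2 * b) 0 := by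
      simpa using (hasDerivAt_id (0 : ℝ)).const_mul (2 * b)
    have h2 : HasDerivAt (fun γ : ℝ => γ ^ 2) 0 (0 : ℝ) := by
      simpa using hasDerivAt_pow 2 (0 : ℝ)
    have := ((hasDerivAt_const (0 : ℝ) a).sub h1).add h2
    refine this.congr_deriv ?_
    ring
  · -- inequality via Cauchy-Schwarz
    have hcs : (uA ⬝ᵥ u) ^ 2 ≤ (uA ⬝ᵥ uA) * (u ⬝ᵥ u) := by
      have := Finset.sum_mul_sq_le_sq_mul_sq Finset.univ uA u
      simpa [dotProduct, pow_two, mul_comm, mul_assoc, mul_left_comm] using this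
    rw [huAuA, huu, mul_one] at hcs
    have h1 : uA ⬝ᵥ u ≤ 1 := by nlinarith [sq_nonneg (uA ⬝ᵥ u - 1)]
    have h2 : 2 * C * (uA ⬝ᵥ u) ≤ 2 * C := by nlinarith
    calc 2 * C * (uA ⬝ᵥ u) / A ≤ 2 * C / A := by gcongr
    _ = 2 * C / A := rfl
  · rw [huAuA, mul_one]
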